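/- For every complex number z with |z| ≤ 1, the real part of 𝔅(z) = (1 + tanh z)^{1/2} satisfies Re 𝔅(z) ≥ √(2/(1+e²)). (The bound is attained at z = −1, since 𝔅(−1) = √(1 − tanh 1) = √(2/(1+e²)).) -/

import Mathlib

open Complex Metric

/-- The bean function 𝔅(z) = (1 + tanh z)^(1/2), principal branch of the complex power. -/
noncomputable def Bean (z : ℂ) : ℂ := (1 + Complex.tanh z) ^ ((1:ℂ)/2)

/-- The open unit disk in ℂ. -/
def unitDisk : Set ℂ := Metric.ball (0:ℂ) 1

/-- `Subord p g` : p is subordinate to g on the unit disk. -/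
def Subord (p g : ℂ → ℂ) : Prop :=
  ∃ ω : ℂ → ℂ, AnalyticOnNhd ℂ ω unitDisk ∧ ω 0 = 0 ∧
    (∀ z ∈ unitDisk, ‖ω z‖ < 1) ∧ ∀ z ∈ unitDisk, p z = g (ω z)

section BeanAux
open Real

lemma exp_tenth_bounds : (1.10517091 : ℝ) ≤ Real.exp (1/10) ∧ Real.exp (1/10) ≤ 1.10517092 := by
  have h := Real.exp_bound (x := 1/10) (by rw [abs_of_pos] <;> norm_num) (n := 6) (by norm_num)
  rw [abs_le, abs_of_pos (by norm_num : (0:ℝ) < 1/10)] at h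
  obtain ⟨h1, h2⟩ := h
  simp [Finset.sum_range_succ, Nat.factorial] at h1 h2
  norm_num at h1 h2 ⊢
  constructor <;> linarith

lemma exp_grid (n : ℕ) : Real.exp (n/10) = Real.exp (1/10) ^ n := by
  rw [← Real.exp_nat_mul]; ring_nf

lemma exp_grid_lb (n : ℕ) : (1.10517091:ℝ)^n ≤ Real.exp (n/10) := by
  rw [exp_grid]; exact pow_le_pow_left₀ (by norm_num) exp_tenth_bounds.1 n

lemma exp_grid_ub (n : ℕ) : Real.exp (n/10) ≤ (1.10517092:ℝ)^n := by
  rw [exp_grid]; exact pow_le_pow_left₀ (Real.exp_pos _).le exp_tenth_bounds.2 n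

lemma e14_lb : (4.0551:ℝ) ≤ Real.exp 1.4 := by
  have := exp_grid_lb 14; norm_num at this ⊢; linarith
lemma e14_ub : Real.exp 1.4 ≤ 4.05521 := by
  have := exp_grid_ub 14; norm_num at this ⊢; linarith
lemma e15_lb : (4.4816:ℝ) ≤ Real.exp 1.5 := by
  have := exp_grid_lb 15; norm_num at this ⊢; linarith
lemma e15_ub : Real.exp 1.5 ≤ 4.4817 := by
  have := exp_grid_ub 15; norm_num at this ⊢; linarith
lemma e16_lb : (4.953:ℝ) ≤ Real.exp 1.6 := by
  have := exp_grid_lb 16; norm_num at this ⊢; linarith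
lemma e16_ub : Real.exp 1.6 ≤ 4.95304 := by
  have := exp_grid_ub 16; norm_num at this ⊢; linarith
lemma e17_ub : Real.exp 1.7 ≤ 5.47395 := by
  have := exp_grid_ub 17; norm_num at this ⊢; linarith

lemma E_bounds : (7.389:ℝ) ≤ Real.exp 1 ^ 2 ∧ Real.exp 1 ^ 2 ≤ 7.3891 := by
  have h1 := Real.exp_one_gt_d9
  have h2 := Real.exp_one_lt_d9
  constructor <;> nlinarith [Real.exp_pos 1]

-- quadratic lower bound for exp on [0,∞)
lemma quad_le_exp {u : ℝ} (hu : 0 ≤ u) : 1 + u + u^2/2 ≤ Real.exp u := by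
  have h := Real.sum_le_exp_of_nonneg hu 3
  simp [Finset.sum_range_succ, Nat.factorial] at h
  linarith

-- quadratic upper bound for exp on (-∞,0]
lemma exp_le_quad {s : ℝ} (hs : s ≤ 0) : Real.exp s ≤ 1 + s + s^2/2 := by
  set u := -s with hu
  have hu0 : 0 ≤ u := by linarith
  have h1 : 1 + u + u^2/2 ≤ Real.exp u := quad_le_exp hu0
  have hpos : 0 ≤ 1 - u + u^2/2 := by nlinarith [sq_nonneg (1-u)]
  have h2 : (1 - u + u^2/2) * (1 + u + u^2/2) ≤ (1 - u + u^2/2) * Real.exp u :=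
    mul_le_mul_of_nonneg_left h1 hpos
  have h3 : (1:ℝ) ≤ (1 - u + u^2/2) * (1 + u + u^2/2) := by nlinarith [pow_le_pow_left₀ hu0 (le_refl u) 4, sq_nonneg (u^2)]
  have hmul : Real.exp s * Real.exp u = 1 := by
    rw [← Real.exp_add]; simp [hu]
  have hepos := Real.exp_pos u
  have : Real.exp s * Real.exp u ≤ (1 - u + u^2/2) * Real.exp u := by
    rw [hmul]; exact le_trans h3 h2
  have := le_of_mul_le_mul_right this hepos
  have hs2 : s^2 = u^2 := by rw [hu]; ring
  linarith [this]

-- D1 : sinh u ≤ u cosh u - u³/3 for u ≥ 0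
lemma sinh_le_mul_cosh {u : ℝ} (hu : 0 ≤ u) :
    Real.sinh u ≤ u * Real.cosh u - u^3/3 := by
  set F : ℝ → ℝ := fun t => t * Real.cosh t - Real.sinh t - t^3/3 with hF
  have hderiv : ∀ t : ℝ, HasDerivAt F (t * Real.sinh t - t^2) t := by
    intro t
    have h1 : HasDerivAt (fun t : ℝ => t * Real.cosh t)
        (1 * Real.cosh t + t * Real.sinh t) t :=
      (hasDerivAt_id t).mul (Real.hasDerivAt_cosh t)
    have h2 := Real.hasDerivAt_sinh t
    have h3 : HasDerivAt (fun t : ℝ => t^3/3) ((3 * t^2)/3) t :=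
      (hasDerivAt_pow 3 t).div_const 3
    have := (h1.sub h2).sub h3
    exact this.congr_deriv (by ring)
  have hmono : MonotoneOn F (Set.Ici (0:ℝ)) := by
    apply monotoneOn_of_deriv_nonneg (convex_Ici 0)
    · apply Continuous.continuousOn
      fun_prop
    · intro t ht
      exact (hderiv t).differentiableAt.differentiableWithinAt
    · intro t ht
      rw [interior_Ici] at ht
      rw [(hderiv t).deriv]
      have ht0 : 0 < t := ht
      have hs : t ≤ Real.sinh t := Real.self_le_sinh_iff.2 ht0.le
      nlinarith
  have h0 : F 0 ≤ F u := hmono (by simp) (by simpa using hu) hu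
  simp [hF] at h0
  linarith

-- D2 : cosh u ≥ 1 + u²/2
lemma one_add_sq_div_two_le_cosh (u : ℝ) : 1 + u^2/2 ≤ Real.cosh u := by
  have h1 : Real.cosh u = Real.cosh (u/2)^2 + Real.sinh (u/2)^2 := by
    have := Real.cosh_two_mul (u/2)
    rw [show 2*(u/2) = u by ring] at this
    linarith
  have h2 : Real.cosh (u/2)^2 = Real.sinh (u/2)^2 + 1 := Real.cosh_sq _
  have h3 : |u/2| ≤ |Real.sinh (u/2)| := by
    rcases le_or_gt 0 u with h | h
    · rw [_root_.abs_of_nonneg (by linarith), _root_.abs_of_nonneg (Real.sinh_nonneg_iff.2 (by linarith))]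
      exact Real.self_le_sinh_iff.2 (by linarith)
    · rw [_root_.abs_of_nonpos (by linarith), _root_.abs_of_nonpos (by
        have := Real.sinh_le_sinh.2 (show u/2 ≤ 0 by linarith)
        simpa using this)]
      rw [← Real.sinh_neg]
      exact Real.self_le_sinh_iff.2 (by linarith)
  have h4 : (u/2)^2 ≤ Real.sinh (u/2)^2 := by
    rw [← _root_.sq_abs (u/2), ← _root_.sq_abs (Real.sinh (u/2))]
    exact pow_le_pow_left₀ (abs_nonneg _) h3 2
  nlinarith

-- Lemma C
lemma sq_exp_sub_one_le {x : ℝ} (hx : 0 ≤ x) :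
    4 * (Real.exp x - 1)^2 ≤
      x^2 * (1 + Real.exp x)^2 - (2/3) * Real.exp x * x^4 - Real.exp x * x^6/18 := by
  set u := x/2 with hud
  have hu : 0 ≤ u := by positivity
  have hD1 := sinh_le_mul_cosh hu
  have hD2 := one_add_sq_div_two_le_cosh u
  have hs0 : 0 ≤ Real.sinh u := Real.sinh_nonneg_iff.2 hu
  have hc1 : (1:ℝ) ≤ Real.cosh u := Real.one_le_cosh u
  -- sinh² ≤ u²cosh² - (2/3)u⁴ - (2/9)u⁶
  have hs2 : Real.sinh u ^ 2 ≤ u^2 * Real.cosh u ^2 - (2/3)*u^4 - (2/9)*u^6 := by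
    have hM : Real.sinh u ^ 2 ≤ (u * Real.cosh u - u^3/3)^2 := by
      have hMn : 0 ≤ u * Real.cosh u - u^3/3 := le_trans hs0 hD1
      nlinarith [hD1, hs0]
    have hc : (2/3)*u^4*(1 + u^2/2) ≤ (2/3)*u^4 * Real.cosh u :=
      mul_le_mul_of_nonneg_left hD2 (by positivity)
    nlinarith [hM, hc]
  set A := Real.exp u with hA
  have hApos : 0 < A := Real.exp_pos u
  have hsinh : 2*A*Real.sinh u = A^2 - 1 := by
    rw [Real.sinh_eq, Real.exp_neg, ← hA]
    field_simp
  have hcosh : 2*A*Real.cosh u = A^2 + 1 := by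
    rw [Real.cosh_eq, Real.exp_neg, ← hA]
    field_simp
  have hx2u : x = 2*u := by rw [hud]; ring
  have hex : Real.exp x = A^2 := by
    rw [hx2u, two_mul, Real.exp_add, ← hA]; ring
  have h5 : (A^2-1)^2 ≤ u^2*(A^2+1)^2 - (8/3)*A^2*u^4 - (8/9)*A^2*u^6 := by
    have h6 : 4*A^2*(Real.sinh u^2) ≤ 4*A^2*(u^2 * Real.cosh u ^2 - (2/3)*u^4 - (2/9)*u^6) :=
      mul_le_mul_of_nonneg_left hs2 (by positivity)
    calc (A^2-1)^2 = 4*A^2*(Real.sinh u^2) := by rw [← hsinh]; ring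
      _ ≤ 4*A^2*(u^2 * Real.cosh u ^2 - (2/3)*u^4 - (2/9)*u^6) := h6
      _ = u^2*(2*A*Real.cosh u)^2 - (8/3)*A^2*u^4 - (8/9)*A^2*u^6 := by ring
      _ = u^2*(A^2+1)^2 - (8/3)*A^2*u^4 - (8/9)*A^2*u^6 := by rw [hcosh]
  rw [hex, hx2u]
  nlinarith [h5]


set_option maxHeartbeats 2000000 in
lemma P_ineq {x : ℝ} (hl : -2 ≤ x) (hr : x ≤ 2) :
    4*(Real.exp x - 1)^2 + 4*Real.exp x*x^2 ≤ (1 + Real.exp 1 ^ 2)*(1 + Real.exp x)*x^2 := by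
  set E := Real.exp 1 ^ 2 with hE
  set a := Real.exp x with ha
  obtain ⟨hE1, hE2⟩ := E_bounds
  have hapos : 0 < a := Real.exp_pos x
  rcases le_or_gt x 0 with hx0 | hx0
  · -- x ≤ 0
    have ha1 : a ≤ 1 := Real.exp_le_one_iff.2 hx0
    have hax : x + 1 ≤ a := Real.add_one_le_exp x
    have h1 : (a-1)^2 ≤ x^2 := by nlinarith [mul_nonneg (show (0:ℝ) ≤ a-1-x by linarith) (show (0:ℝ) ≤ 1-a-x by linarith)]
    have hkey : 0 ≤ x^2*((E-3)*(1+a)) := by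
      apply mul_nonneg (sq_nonneg x)
      apply mul_nonneg (by linarith) (by linarith)
    linarith [h1, hkey]
  · -- 0 < x
    have hx0' : (0:ℝ) ≤ x := hx0.le
    have hC := sq_exp_sub_one_le hx0'
    have ha1 : 1 ≤ a := Real.one_le_exp hx0'
    rcases le_or_gt x 1.4 with hx14 | hx14
    · have haU : a ≤ 4.05521 := le_trans (Real.exp_le_exp.2 hx14) e14_ub
      have keyG : 0 ≤ (1+a)*(E-a) - 4*a := by
        nlinarith [mul_nonneg (show (0:ℝ) ≤ a - 1 by linarith) (show (0:ℝ) ≤ 4.05521 - a by linarith)]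
      have h4 : 0 ≤ x^2 * ((1+a)*(E-a) - 4*a) := mul_nonneg (sq_nonneg x) keyG
      linarith [hC, h4, mul_nonneg hapos.le (pow_nonneg hx0' 4), mul_nonneg hapos.le (pow_nonneg hx0' 6)]
    · rcases le_or_gt x 1.7 with hx17 | hx17
      · -- middle region: piecewise
        have hmid : ∀ c d La Ua : ℝ, c ≤ x → x ≤ d → La ≤ a → a ≤ Ua → 0 < c → 0 ≤ La → Ua ≤ E - 1 →
            (2/3)*c^2 + c^4/18 - 4 ≤ 0 →
            0 ≤ (1+La)*(7.389-Ua) + Ua*((2/3)*c^2 + c^4/18 - 4) →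
            4*(a - 1)^2 + 4*a*x^2 ≤ (1+E)*(1+a)*x^2 := by
          intro c d La Ua hcx hxd haL haU hc hLa0 hUE hBc hnum
          have hEa : (0:ℝ) ≤ E - a := by linarith
          have hx2 : c^2 ≤ x^2 := pow_le_pow_left₀ hc.le hcx 2
          have hx4 : c^4 ≤ x^4 := pow_le_pow_left₀ hc.le hcx 4
          have s1 : (1+La)*(E-a) ≤ (1+a)*(E-a) := mul_le_mul_of_nonneg_right (by linarith) hEa
          have s2 : (1+La)*(7.389-Ua) ≤ (1+La)*(E-a) := by
            apply mul_le_mul_of_nonneg_left (by linarith) (by linarith)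
          have s3 : a*((2/3)*c^2 + c^4/18 - 4) ≤ a*((2/3)*x^2 + x^4/18 - 4) := by
            apply mul_le_mul_of_nonneg_left (by linarith) hapos.le
          have s4 : Ua*((2/3)*c^2 + c^4/18 - 4) ≤ a*((2/3)*c^2 + c^4/18 - 4) := by
            apply mul_le_mul_of_nonpos_right haU hBc
          have keyG : 0 ≤ (1+a)*(E-a) - 4*a + (2/3)*a*x^2 + a*x^4/18 := by linarith [s1,s2,s3,s4]
          have h4 : 0 ≤ x^2 * ((1+a)*(E-a) - 4*a + (2/3)*a*x^2 + a*x^4/18) :=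
            mul_nonneg (sq_nonneg x) keyG
          linarith [hC, h4]
        rcases le_or_gt x 1.5 with h | h
        · exact hmid 1.4 1.5 4.0551 4.4817 (by linarith) h
            (le_trans e14_lb (Real.exp_le_exp.2 (by linarith))) (le_trans (Real.exp_le_exp.2 h) e15_ub)
            (by norm_num) (by norm_num) (by linarith) (by norm_num) (by norm_num)
        · rcases le_or_gt x 1.6 with h2 | h2
          · exact hmid 1.5 1.6 4.4816 4.95304 h.le h2
              (le_trans e15_lb (Real.exp_le_exp.2 h.le)) (le_trans (Real.exp_le_exp.2 h2) e16_ub)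
              (by norm_num) (by norm_num) (by linarith) (by norm_num) (by norm_num)
          · exact hmid 1.6 1.7 4.953 5.47395 h2.le hx17
              (le_trans e16_lb (Real.exp_le_exp.2 h2.le)) (le_trans (Real.exp_le_exp.2 hx17) e17_ub)
              (by norm_num) (by norm_num) (by linarith) (by norm_num) (by norm_num)
      · -- q-region 1.7 < x ≤ 2
        set b := Real.exp (x - 2) with hb
        have hbpos : 0 < b := Real.exp_pos _
        have haEb : a = E * b := by
          rw [ha, hb, hE, show Real.exp 1 ^2 = Real.exp 2 by rw [sq, ← Real.exp_add]; norm_num,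
            ← Real.exp_add]
          norm_num
        have hb_lb : x - 1 ≤ b := by
          have := Real.add_one_le_exp (x-2)
          rw [← hb] at this; linarith
        have hb2 : b^2 ≤ 1 + (2*x-4) + (2*x-4)^2/2 := by
          have hbb : b^2 = Real.exp (2*x - 4) := by
            rw [sq, hb, ← Real.exp_add]; ring_nf
          rw [hbb]
          exact exp_le_quad (by linarith)
        have hE3 : (0:ℝ) ≤ E^2 - 3*E := by nlinarith
        have hp1 : 0 ≤ (x-1.7)*(2-x)*(E^2-3*E) :=
          mul_nonneg (mul_nonneg (by linarith) (by linarith)) hE3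
        have hlin1 : (0:ℝ) ≤ 3.3*E^2+13.1*E-1 := by nlinarith [sq_nonneg E]
        have hp2 : 0 ≤ (x-1.7)*(3.3*E^2+13.1*E-1) := mul_nonneg (by linarith) hlin1
        have hq2 : (0:ℝ) ≤ -0.99*E^2+8.07*E-3.7 := by
          nlinarith [mul_nonneg (show (0:ℝ) ≤ E - 7.389 by linarith) (show (0:ℝ) ≤ 7.3891 - E by linarith)]
        have hR : 0 ≤ (3*E-E^2)*x^2 + (7*E^2+2*E-1)*x - (10*E^2+4*E+2) := by
          linarith [hp1, hp2, hq2]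
        have hQ : 0 ≤ (2-x) * ((3*E-E^2)*x^2 + (7*E^2+2*E-1)*x - (10*E^2+4*E+2)) :=
          mul_nonneg (by linarith) hR
        have ht1 : 0 ≤ E*(E-3)*x^2*(b-(x-1)) := by
          apply mul_nonneg _ (by linarith)
          exact mul_nonneg (mul_nonneg (by linarith) (by linarith)) (sq_nonneg x)
        have ht2 : 0 ≤ 8*E*(b-(x-1)) := mul_nonneg (by linarith) (by linarith)
        have ht3 : 0 ≤ 4*E^2*((2*x^2-6*x+5) - b^2) := by
          apply mul_nonneg (by positivity)
          nlinarith [hb2]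
        rw [haEb]
        linarith [hQ, ht1, ht2, ht3]

end BeanAux

section BeanMain

lemma re_cpow_half {w : ℂ} (hw : w ≠ 0) :
    (w ^ ((1:ℂ)/2)).re = Real.sqrt ((‖w‖ + w.re)/2) := by
  rw [Complex.cpow_def_of_ne_zero hw, Complex.exp_re]
  have h1 : (Complex.log w * (1/2)).re = Real.log (‖w‖) / 2 := by
    simp [Complex.mul_re, Complex.log_re]; ring
  have h2 : (Complex.log w * (1/2)).im = Complex.arg w / 2 := by
    simp [Complex.mul_im, Complex.log_im]; ring
  rw [h1, h2]
  have habs : 0 < ‖w‖ := norm_pos_iff.mpr hw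
  have hexp : Real.exp (Real.log (‖w‖) / 2) = Real.sqrt (‖w‖) := by
    rw [show Real.log (‖w‖) / 2 = 2⁻¹ * Real.log (‖w‖) by ring,
      ← Real.log_rpow habs, Real.exp_log (Real.rpow_pos_of_pos habs _),
      Real.sqrt_eq_rpow]
    norm_num
  rw [hexp, Real.cos_half (Complex.neg_pi_lt_arg w).le (Complex.arg_le_pi w),
    Complex.cos_arg hw, ← Real.sqrt_mul habs.le]
  congr 1
  field_simp



lemma v_ne_zero {z : ℂ} (hz : ‖z‖ ≤ 1) : 1 + Complex.exp (-2*z) ≠ 0 := by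
  intro h
  have hexp : Complex.exp (-2*z) = -1 := by linear_combination h
  have h2 : Complex.exp (-2*z + -2*z) = 1 := by rw [Complex.exp_add, hexp]; norm_num
  rw [Complex.exp_eq_one_iff] at h2
  obtain ⟨n, hn⟩ := h2
  have hzval : z = -(n*(2*(Real.pi:ℂ)*Complex.I))/4 := by linear_combination (-1/4 : ℂ)*hn
  rcases eq_or_ne n 0 with h0 | h0
  · rw [h0] at hzval
    simp at hzval
    rw [hzval] at hexp
    simp at hexp
    norm_num at hexp
  · have hnorm : ‖z‖ = |(n:ℝ)| * Real.pi / 2 := by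
      rw [hzval]
      simp only [norm_neg, norm_div, norm_mul, Complex.norm_intCast, Complex.norm_I,
        Complex.norm_real, Complex.norm_ofNat, Real.norm_eq_abs,
        abs_of_pos Real.pi_pos]
      push_cast
      ring
    have hn1 : (1:ℝ) ≤ |(n:ℝ)| := by
      rw [← Int.cast_abs]
      exact_mod_cast Int.one_le_abs h0
    have hpi := Real.pi_gt_three
    rw [hnorm] at hz
    nlinarith

lemma one_add_tanh {z : ℂ} (hv : 1 + Complex.exp (-2*z) ≠ 0) :
    1 + Complex.tanh z = 2/(1 + Complex.exp (-2*z)) := by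
  have e1 : Complex.exp z * Complex.exp (-2*z) = Complex.exp (-z) := by
    rw [← Complex.exp_add]; ring_nf
  have hsinh : Complex.sinh z = (Complex.exp z - Complex.exp (-z))/2 := rfl
  have hcosh : Complex.cosh z = (Complex.exp z + Complex.exp (-z))/2 := rfl
  have hcosh_ne : Complex.cosh z ≠ 0 := by
    rw [hcosh]
    have : Complex.exp z + Complex.exp (-z) = Complex.exp z * (1 + Complex.exp (-2*z)) := by
      linear_combination -e1
    rw [this]
    exact div_ne_zero (mul_ne_zero (Complex.exp_ne_zero z) hv) two_ne_zero
  rw [Complex.tanh_eq_sinh_div_cosh]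
  field_simp
  rw [show -(2*z) = (-2)*z from by ring, eq_div_iff hv, hcosh, hsinh]
  linear_combination e1

set_option maxHeartbeats 1000000 in
/-- Re 𝔅(z) ≥ √(2/(1+e²)) for |z| ≤ 1. -/
theorem beanRealPartLowerBound :
    ∀ z : ℂ, ‖z‖ ≤ 1 → Real.sqrt (2 / (1 + Real.exp 1 ^ 2)) ≤ (Bean z).re := by
  intro z hz
  obtain ⟨hE1, hE2⟩ := E_bounds
  set E := Real.exp 1 ^ 2 with hEdef
  have h1E : (0:ℝ) < 1 + E := by linarith
  set v := 1 + Complex.exp (-2*z) with hvdef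
  have hv : v ≠ 0 := v_ne_zero hz
  have hw : 1 + Complex.tanh z = 2/v := one_add_tanh hv
  have hw0 : 1 + Complex.tanh z ≠ 0 := by
    rw [hw]; exact div_ne_zero two_ne_zero hv
  show Real.sqrt (2/(1+E)) ≤ ((1 + Complex.tanh z) ^ ((1:ℂ)/2)).re
  rw [re_cpow_half hw0]
  apply Real.sqrt_le_sqrt
  set x := (-2*z).re with hxdef
  set y := (-2*z).im with hydef
  set a := Real.exp x with hadef
  set c := Real.cos y with hcdef
  have hapos : 0 < a := Real.exp_pos x
  set r := ‖v‖ with hrdef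
  have hrpos : 0 < r := norm_pos_iff.mpr hv
  have hvre : v.re = 1 + a*c := by
    rw [hvdef, Complex.add_re, Complex.exp_re, Complex.one_re]
  have hvim : v.im = a * Real.sin y := by
    rw [hvdef, Complex.add_im, Complex.exp_im, Complex.one_im, zero_add]
  have hsc := Real.sin_sq_add_cos_sq y
  have hr2 : r^2 = 1 + 2*a*c + a^2 := by
    rw [hrdef, Complex.sq_norm, Complex.normSq_apply, hvre, hvim]
    nlinarith [hsc]
  have hc2 : c^2 ≤ 1 := by nlinarith [hsc, sq_nonneg (Real.sin y)]
  have hrac : a + c ≤ r := by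
    rcases le_or_gt (a+c) 0 with h | h
    · linarith
    · have hsq : (a+c)^2 ≤ r^2 := by rw [hr2]; nlinarith
      nlinarith
  have hx2y2 : x^2 + y^2 ≤ 4 := by
    have h1 : Complex.normSq (-2*z) = x^2 + y^2 := by
      rw [Complex.normSq_apply, hxdef, hydef]; ring
    have h2 : Complex.normSq (-2*z) = ‖(-2*z)‖^2 := (Complex.sq_norm _).symm
    have h3 : ‖(-2*z)‖ = 2 * ‖z‖ := by
      rw [norm_mul]; simp
    have h4 : ‖z‖ ≤ 1 := hz
    nlinarith [norm_nonneg z]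
  have hxl : -2 ≤ x := by nlinarith [sq_nonneg y]
  have hxr : x ≤ 2 := by nlinarith [sq_nonneg y]
  have hc_lb : 1 - y^2/2 ≤ c := Real.one_sub_sq_div_two_le_cos
  have hP := P_ineq hxl hxr
  rw [← hadef, ← hEdef] at hP
  have hcoeff : 0 ≤ (1+E)*(1+a) - 4*a := by nlinarith
  have hstep : 0 ≤ ((1+E)*(1+a) - 4*a) * (c - (x^2-2)/2) :=
    mul_nonneg hcoeff (by linarith)
  have KEY2 : 2*(1 + 2*a*c + a^2) ≤ (1+E)*(1+a)*(1+c) := by nlinarith [hP, hstep]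
  have hprod : 0 ≤ (1+E) * (r - a - c) := mul_nonneg h1E.le (by linarith)
  have key1 : 2*r^2 ≤ (1+E)*(r + (1+a*c)) := by nlinarith [KEY2, hprod, hr2]
  have habsw : ‖(1 + Complex.tanh z)‖ = 2 / r := by
    rw [hw, norm_div, Complex.norm_two, hrdef]
  have hwre : (1 + Complex.tanh z).re = 2*(1+a*c)/r^2 := by
    rw [hw, Complex.div_re, hvre]
    simp only [Complex.re_ofNat, Complex.im_ofNat]
    rw [show Complex.normSq v = r^2 by rw [hrdef, Complex.sq_norm]]
    ring
  rw [habsw, hwre]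
  have hrhs : (2/r + 2*(1+a*c)/r^2)/2 = (r + (1+a*c))/r^2 := by
    field_simp
  rw [hrhs]
  rw [div_le_div_iff₀ h1E (by positivity)]
  nlinarith [key1]

end BeanMain
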